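/- If λ₀ ∈ ℝ satisfies ξ(λ₀) = 0 and λ₁ ∈ ℂ satisfies ξ(λ₁) = 0, then Re(λ₁) ≤ λ₀. That is, every complex zero of the characteristic function has real part at most the unique real zero. -/

import Mathlib

open MeasureTheory Set

noncomputable def Pa (x₀ : ℝ) (g w : ℝ → ℝ) (c x : ℝ) : ℝ := ∫ s in x₀..x, (c + w s) / g s
noncomputable def Ea (x₀ : ℝ) (g w : ℝ → ℝ) (c x : ℝ) : ℝ := Real.exp (-(Pa x₀ g w c x))

lemma aux_cont (x₀ x₁ : ℝ) (hx : x₀ ≤ x₁) (g w : ℝ → ℝ)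
    (hgc : ContinuousOn g (Icc x₀ x₁)) (hg0 : ∀ x ∈ Icc x₀ x₁, g x ≠ 0)
    (hw : ContinuousOn w (Icc x₀ x₁)) (c : ℝ) :
    ContinuousOn (Ea x₀ g w c) (Icc x₀ x₁) := by
  have hint : IntervalIntegrable (fun s => (c + w s) / g s) volume x₀ x₁ := by
    apply ContinuousOn.intervalIntegrable
    rw [uIcc_of_le hx]
    exact (continuousOn_const.add hw).div hgc hg0
  have hP : ContinuousOn (Pa x₀ g w c) (Icc x₀ x₁) := by
    have := intervalIntegral.continuousOn_primitive_interval' hint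
      (left_mem_uIcc (a := x₀) (b := x₁))
    rw [uIcc_of_le hx] at this
    exact this
  exact Real.continuous_exp.comp_continuousOn hP.neg

lemma aux_intable (x₀ x₁ : ℝ) (hxm : x₀ ≤ x₁) (g w : ℝ → ℝ)
    (hgc : ContinuousOn g (Icc x₀ x₁)) (hg0 : ∀ x ∈ Icc x₀ x₁, g x ≠ 0)
    (hw : ContinuousOn w (Icc x₀ x₁)) (c : ℝ) (x : ℝ) (hx2 : x ∈ Icc x₀ x₁) :
    IntervalIntegrable (fun s => (c + w s) / g s) volume x₀ x := by
  apply ContinuousOn.intervalIntegrable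
  rw [uIcc_of_le hx2.1]
  exact ((continuousOn_const.add hw).div hgc hg0).mono (Icc_subset_Icc le_rfl hx2.2)

lemma aux_mono (x₀ x₁ : ℝ) (g w : ℝ → ℝ)
    (hgc : ContinuousOn g (Icc x₀ x₁)) (hgpos : ∀ x ∈ Icc x₀ x₁, 0 < g x)
    (hw : ContinuousOn w (Icc x₀ x₁)) (c d : ℝ) (hcd : c ≤ d) (x : ℝ) (hx2 : x ∈ Icc x₀ x₁) :
    Ea x₀ g w d x ≤ Ea x₀ g w c x := by
  have hg0 : ∀ x ∈ Icc x₀ x₁, g x ≠ 0 := fun y hy => (hgpos y hy).ne'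
  have h : Pa x₀ g w c x ≤ Pa x₀ g w d x := by
    apply intervalIntegral.integral_mono_on hx2.1
      (aux_intable x₀ x₁ (hx2.1.trans hx2.2) g w hgc hg0 hw c x hx2)
      (aux_intable x₀ x₁ (hx2.1.trans hx2.2) g w hgc hg0 hw d x hx2)
    intro s hs
    have hgs := hgpos s (Icc_subset_Icc le_rfl hx2.2 hs)
    gcongr
  exact Real.exp_le_exp.mpr (by linarith)

lemma aux_strict (x₀ x₁ : ℝ) (g w : ℝ → ℝ)
    (hgc : ContinuousOn g (Icc x₀ x₁)) (hgpos : ∀ x ∈ Icc x₀ x₁, 0 < g x)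
    (hw : ContinuousOn w (Icc x₀ x₁)) (c d : ℝ) (hcd : c < d) (x : ℝ)
    (hx1 : x₀ < x) (hx2 : x ≤ x₁) :
    Ea x₀ g w d x < Ea x₀ g w c x := by
  have hg0 : ∀ x ∈ Icc x₀ x₁, g x ≠ 0 := fun y hy => (hgpos y hy).ne'
  have hxm : x ∈ Icc x₀ x₁ := ⟨hx1.le, hx2⟩
  have hdiff : Pa x₀ g w d x - Pa x₀ g w c x = ∫ s in x₀..x, (d - c) / g s := by
    rw [Pa, Pa, ← intervalIntegral.integral_sub
      (aux_intable x₀ x₁ (hx1.le.trans hx2) g w hgc hg0 hw d x hxm)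
      (aux_intable x₀ x₁ (hx1.le.trans hx2) g w hgc hg0 hw c x hxm)]
    congr 1
    ext s
    rw [div_sub_div_same, add_sub_add_right_eq_sub]
  have hpos : 0 < ∫ s in x₀..x, (d - c) / g s := by
    apply intervalIntegral.intervalIntegral_pos_of_pos_on _ _ hx1
    · apply ContinuousOn.intervalIntegrable
      rw [uIcc_of_le hx1.le]
      exact (continuousOn_const.div hgc hg0).mono (Icc_subset_Icc le_rfl hx2)
    · intro s hs
      exact div_pos (by linarith) (hgpos s ⟨hs.1.le, hs.2.le.trans hx2⟩)
  have : Pa x₀ g w c x < Pa x₀ g w d x := by linarith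
  exact Real.exp_lt_exp.mpr (by linarith)
lemma aux_inner (x₀ x₁ : ℝ) (g w : ℝ → ℝ)
    (hgc : ContinuousOn g (Icc x₀ x₁)) (hg0 : ∀ x ∈ Icc x₀ x₁, g x ≠ 0)
    (hw : ContinuousOn w (Icc x₀ x₁)) (l : ℂ) (x : ℝ) (hxm : x ∈ Icc x₀ x₁) :
    (∫ s in x₀..x, (l + (w s : ℂ)) / (g s : ℂ)) =
      ((Pa x₀ g w l.re x : ℝ) : ℂ) +
      ((∫ s in x₀..x, l.im / g s : ℝ) : ℂ) * Complex.I := by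
  have hsub : Icc x₀ x ⊆ Icc x₀ x₁ := Icc_subset_Icc le_rfl hxm.2
  have huIcc : uIcc x₀ x = Icc x₀ x := uIcc_of_le hxm.1
  have h1 : IntervalIntegrable (fun s => (((l.re + w s) / g s : ℝ) : ℂ)) volume x₀ x := by
    apply ContinuousOn.intervalIntegrable
    rw [huIcc]
    exact Complex.continuous_ofReal.comp_continuousOn
      (((continuousOn_const.add hw).div hgc hg0).mono hsub)
  have h2 : IntervalIntegrable (fun s => ((l.im / g s : ℝ) : ℂ) * Complex.I) volume x₀ x := by
    apply ContinuousOn.intervalIntegrable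
    rw [huIcc]
    exact (Complex.continuous_ofReal.comp_continuousOn
      ((continuousOn_const.div hgc hg0).mono hsub)).mul continuousOn_const
  have key : ∀ s, (l + (w s : ℂ)) / (g s : ℂ) =
      (((l.re + w s) / g s : ℝ) : ℂ) + ((l.im / g s : ℝ) : ℂ) * Complex.I := by
    intro s; apply Complex.ext <;> simp
  simp_rw [key]
  rw [intervalIntegral.integral_add h1 h2, intervalIntegral.integral_mul_const,
    intervalIntegral.integral_ofReal, intervalIntegral.integral_ofReal, Pa]

lemma aux_integrable (x₀ x₁ Mq : ℝ) (hx : x₀ ≤ x₁) (q h : ℝ → ℝ) (hqm : Measurable q)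
    (hqb : ∀ x ∈ Icc x₀ x₁, |q x| ≤ Mq) (hh : ContinuousOn h (Icc x₀ x₁)) :
    IntervalIntegrable (fun x => q x * h x) volume x₀ x₁ := by
  rw [intervalIntegrable_iff_integrableOn_Ioc_of_le hx]
  obtain ⟨C, hC⟩ := isCompact_Icc.exists_bound_of_continuousOn hh
  have hmeas : AEStronglyMeasurable (fun x => q x * h x) (volume.restrict (Ioc x₀ x₁)) :=
    hqm.aestronglyMeasurable.mul
      ((hh.mono Ioc_subset_Icc_self).aestronglyMeasurable measurableSet_Ioc)
  apply Integrable.mono' (integrable_const (Mq * C)) hmeas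
  filter_upwards [ae_restrict_mem measurableSet_Ioc] with x hxm
  have hxm' : x ∈ Icc x₀ x₁ := Ioc_subset_Icc_self hxm
  have h1 := hqb x hxm'
  have h2 := hC x hxm'
  have : ‖q x * h x‖ = |q x| * ‖h x‖ := by rw [norm_mul]; rfl
  rw [this]
  exact mul_le_mul h1 h2 (norm_nonneg _) ((abs_nonneg _).trans h1)


/-- The characteristic function for complex `λ`. -/
noncomputable def xiC (x₀ x₁ : ℝ) (g w q : ℝ → ℝ) (l : ℂ) : ℂ :=
  (∫ x in x₀..x₁, ((q x / g x : ℝ) : ℂ) *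
      Complex.exp (-∫ s in x₀..x, (l + (w s : ℂ)) / (g s : ℂ))) - 1

/-- Every complex zero of `ξ` has real part at most the unique real zero `λ₀`. -/
theorem stmt_13 (x₀ x₁ Mq : ℝ) (hx₀ : 0 < x₀) (hx : x₀ < x₁)
    (g w q : ℝ → ℝ)
    (hg : ContDiffOn ℝ 1 g (Icc x₀ x₁)) (hgpos : ∀ x ∈ Icc x₀ x₁, 0 < g x)
    (hw : ContinuousOn w (Icc x₀ x₁)) (hw0 : ∀ x ∈ Icc x₀ x₁, 0 ≤ w x)
    (hqm : Measurable q) (hqb : ∀ x ∈ Icc x₀ x₁, |q x| ≤ Mq)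
    (hq0 : ∀ᵐ x ∂(volume.restrict (Icc x₀ x₁)), 0 ≤ q x)
    (hqpos : 0 < ∫ x in x₀..x₁, q x)
    (l₀ : ℝ) (hroot : xiC x₀ x₁ g w q (l₀ : ℂ) = 0)
    (l₁ : ℂ) (hroot₁ : xiC x₀ x₁ g w q l₁ = 0) :
    l₁.re ≤ l₀ := by
  have hx' : x₀ ≤ x₁ := hx.le
  have hgc : ContinuousOn g (Icc x₀ x₁) := hg.continuousOn
  have hg0 : ∀ x ∈ Icc x₀ x₁, g x ≠ 0 := fun y hy => (hgpos y hy).ne'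
  set r := l₁.re with hr
  by_contra hcon
  push_neg at hcon
  have hprod : ∀ c : ℝ, IntervalIntegrable (fun x => q x / g x * Ea x₀ g w c x) volume x₀ x₁ := by
    intro c
    have := aux_integrable x₀ x₁ Mq hx' q (fun x => (g x)⁻¹ * Ea x₀ g w c x) hqm hqb
      ((hgc.inv₀ hg0).mul (aux_cont x₀ x₁ hx' g w hgc hg0 hw c))
    simpa [div_eq_mul_inv, mul_assoc] using this
  -- Step A : real root gives integral = 1
  have hA : (∫ x in x₀..x₁, q x / g x * Ea x₀ g w l₀ x) = 1 := by
    have hcongr : EqOn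
        (fun x => ((q x / g x : ℝ) : ℂ) *
          Complex.exp (-∫ s in x₀..x, ((l₀ : ℂ) + (w s : ℂ)) / (g s : ℂ)))
        (fun x => ((q x / g x * Ea x₀ g w l₀ x : ℝ) : ℂ)) (uIcc x₀ x₁) := by
      intro y hy
      rw [uIcc_of_le hx'] at hy
      have h2 := aux_inner x₀ x₁ g w hgc hg0 hw (l₀ : ℂ) y hy
      simp only [Complex.ofReal_re, Complex.ofReal_im, zero_div,
        intervalIntegral.integral_zero, Complex.ofReal_zero, zero_mul, add_zero] at h2
      simp only [h2, Ea]
      push_cast [Complex.ofReal_exp]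
      ring
    have hcg := intervalIntegral.integral_congr (μ := volume) hcongr
    rw [intervalIntegral.integral_ofReal] at hcg
    rw [xiC, hcg] at hroot
    have h1 : ((∫ x in x₀..x₁, q x / g x * Ea x₀ g w l₀ x : ℝ) : ℂ) = 1 := sub_eq_zero.mp hroot
    exact_mod_cast h1
  -- Step B : 1 ≤ ∫ q/g * Ea r
  have hB : 1 ≤ ∫ x in x₀..x₁, q x / g x * Ea x₀ g w r x := by
    rw [xiC] at hroot₁
    have h1 : (∫ x in x₀..x₁, ((q x / g x : ℝ) : ℂ) *
        Complex.exp (-∫ s in x₀..x, (l₁ + (w s : ℂ)) / (g s : ℂ))) = 1 := sub_eq_zero.mp hroot₁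
    have h2 : (1 : ℝ) ≤ ∫ x in x₀..x₁, ‖((q x / g x : ℝ) : ℂ) *
        Complex.exp (-∫ s in x₀..x, (l₁ + (w s : ℂ)) / (g s : ℂ))‖ := by
      calc (1 : ℝ) = ‖(1 : ℂ)‖ := by simp
        _ = ‖∫ x in x₀..x₁, ((q x / g x : ℝ) : ℂ) *
            Complex.exp (-∫ s in x₀..x, (l₁ + (w s : ℂ)) / (g s : ℂ))‖ := by rw [h1]
        _ ≤ _ := intervalIntegral.norm_integral_le_integral_norm hx'
    have h3 : (∫ x in x₀..x₁, ‖((q x / g x : ℝ) : ℂ) *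
        Complex.exp (-∫ s in x₀..x, (l₁ + (w s : ℂ)) / (g s : ℂ))‖)
        = ∫ x in x₀..x₁, |q x / g x| * Ea x₀ g w r x := by
      apply intervalIntegral.integral_congr
      intro y hy
      rw [uIcc_of_le hx'] at hy
      simp only [aux_inner x₀ x₁ g w hgc hg0 hw l₁ y hy]
      simp [Complex.norm_exp, Complex.norm_real, Ea]
      rw [abs_div, hr]
    have h4 : (∫ x in x₀..x₁, |q x / g x| * Ea x₀ g w r x)
        = ∫ x in x₀..x₁, q x / g x * Ea x₀ g w r x := by
      apply intervalIntegral.integral_congr_ae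
      have hq0' : ∀ᵐ y, y ∈ Icc x₀ x₁ → 0 ≤ q y := (ae_restrict_iff' measurableSet_Icc).mp hq0
      filter_upwards [hq0'] with y hy hymem
      rw [uIoc_of_le hx'] at hymem
      have hym : y ∈ Icc x₀ x₁ := Ioc_subset_Icc_self hymem
      rw [abs_div, abs_of_nonneg (hy hym), abs_of_pos (hgpos y hym)]
    rw [h3, h4] at h2
    exact h2
  -- Step C : strict monotonicity gives a contradiction
  set f : ℝ → ℝ := fun x => q x / g x * (Ea x₀ g w l₀ x - Ea x₀ g w r x) with hfdef
  have hfi : IntervalIntegrable f volume x₀ x₁ := by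
    have := aux_integrable x₀ x₁ Mq hx' q
      (fun x => (g x)⁻¹ * (Ea x₀ g w l₀ x - Ea x₀ g w r x)) hqm hqb
      ((hgc.inv₀ hg0).mul ((aux_cont x₀ x₁ hx' g w hgc hg0 hw l₀).sub
        (aux_cont x₀ x₁ hx' g w hgc hg0 hw r)))
    simpa [hfdef, div_eq_mul_inv, mul_assoc] using this
  have hae : 0 ≤ᵐ[volume.restrict (Set.uIoc x₀ x₁)] f := by
    rw [uIoc_of_le hx']
    have hq0' := ae_restrict_of_ae_restrict_of_subset Ioc_subset_Icc_self hq0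
    filter_upwards [hq0', ae_restrict_mem measurableSet_Ioc] with y hy hym
    have hymem : y ∈ Icc x₀ x₁ := Ioc_subset_Icc_self hym
    refine mul_nonneg (div_nonneg hy (hgpos y hymem).le) ?_
    exact sub_nonneg.mpr (aux_mono x₀ x₁ g w hgc hgpos hw l₀ r hcon.le y hymem)
  have hsupp : 0 < volume (Function.support f ∩ Ioc x₀ x₁) := by
    have hsub : {y | q y ≠ 0} ∩ Ioc x₀ x₁ ⊆ Function.support f ∩ Ioc x₀ x₁ := by
      rintro y ⟨hqy, hym⟩
      refine ⟨?_, hym⟩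
      have hymem : y ∈ Icc x₀ x₁ := Ioc_subset_Icc_self hym
      have hlt := aux_strict x₀ x₁ g w hgc hgpos hw l₀ r hcon y hym.1 hym.2
      exact mul_ne_zero (div_ne_zero hqy (hg0 y hymem)) (by linarith)
    by_contra hze
    push_neg at hze
    have hz : volume ({y | q y ≠ 0} ∩ Ioc x₀ x₁) = 0 :=
      le_antisymm (le_trans (measure_mono hsub) hze) zero_le
    have hms : MeasurableSet {y | q y ≠ 0} := (hqm (measurableSet_singleton 0)).compl
    have hres : (volume.restrict (Ioc x₀ x₁)) {y | q y ≠ 0} = 0 := by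
      rw [Measure.restrict_apply hms]; exact hz
    have hq0ae : ∀ᵐ y ∂(volume.restrict (Ioc x₀ x₁)), q y = 0 := by
      rw [ae_iff]; simpa using hres
    have hzero : (∫ x in x₀..x₁, q x) = 0 := by
      rw [intervalIntegral.integral_of_le hx']
      exact integral_eq_zero_of_ae hq0ae
    linarith
  have hD : 0 < ∫ x in x₀..x₁, f x := by
    rw [intervalIntegral.integral_pos_iff_support_of_nonneg_ae' hae hfi]
    exact ⟨hx, hsupp⟩
  have hsplit : (∫ x in x₀..x₁, f x)
      = (∫ x in x₀..x₁, q x / g x * Ea x₀ g w l₀ x)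
        - ∫ x in x₀..x₁, q x / g x * Ea x₀ g w r x := by
    rw [← intervalIntegral.integral_sub (hprod l₀) (hprod r)]
    apply intervalIntegral.integral_congr
    intro y hy
    simp [hfdef, mul_sub]
  linarith
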